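/- Consider on ℝ³ the vector fields X₀(x) = (cos x₃, sin x₃, 1) and X₁(x) = (0, 0, 1), and the family ℱ' = {X₀ + u·X₁ : u ∈ ℝ}. For every x' = (x₁', x₂', x₃') ∈ ℝ³, every t ≥ 0, and every ε > 0, there exists a piecewise integral curve η : [0, t] → ℝ³ of ℱ' with η(0) = x' such that |(η₁(s), η₂(s)) − (x₁', x₂')| < ε for all s ∈ [0, t]; in particular (η₁(t), η₂(t)) lies within distance ε of (x₁', x₂'). -/

import Mathlib

open scoped RealInnerProductSpace

/-- A piecewise integral curve of a family `F` of vector fields on `[0, T]`: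
a continuous curve which, on each piece of some partition `0 = t₀ < t₁ < … < t_m = T`,
is an integral curve of a single member of `F`. -/
def IsPiecewiseIntegralCurve {E : Type*} [NormedAddCommGroup E] [NormedSpace ℝ E]
    (F : Set (E → E)) (T : ℝ) (η : ℝ → E) : Prop :=
  ContinuousOn η (Set.Icc 0 T) ∧
  ∃ (m : ℕ) (τ : Fin (m + 1) → ℝ), τ 0 = 0 ∧ τ (Fin.last m) = T ∧ StrictMono τ ∧
    ∀ i : Fin m, ∃ V ∈ F, ∀ s ∈ Set.Ioo (τ i.castSucc) (τ i.succ),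
      HasDerivAt η (V (η s)) s

/-- The drift vector field `X₀(x) = (cos x₃, sin x₃, 1)` on `ℝ³`. -/
noncomputable def X0 : EuclideanSpace ℝ (Fin 3) → EuclideanSpace ℝ (Fin 3) :=
  fun x => WithLp.toLp 2 ![Real.cos (x 2), Real.sin (x 2), 1]

/-- The vector field `X₁(x) = (0, 0, 1)` on `ℝ³`. -/
noncomputable def X1 : EuclideanSpace ℝ (Fin 3) → EuclideanSpace ℝ (Fin 3) :=
  fun _ => WithLp.toLp 2 (![0, 0, 1] : Fin 3 → ℝ)

/-- The control family `ℱ' = {X₀ + u·X₁ : u ∈ ℝ}`. -/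
noncomputable def F' : Set (EuclideanSpace ℝ (Fin 3) → EuclideanSpace ℝ (Fin 3)) :=
  {V | ∃ u : ℝ, V = fun x => X0 x + u • X1 x}

/-- For every initial point `x'`, every time `t ≥ 0` and every `ε > 0`,
there is a piecewise integral curve of `ℱ'` starting at `x'` whose planar components
`(η₁, η₂)` stay within (Euclidean) distance `ε` of `(x₁', x₂')` on all of `[0, t]`. -/
theorem statement13 (x' : EuclideanSpace ℝ (Fin 3)) (t : ℝ) (ht : 0 ≤ t)
    (ε : ℝ) (hε : 0 < ε) :
    ∃ η : ℝ → EuclideanSpace ℝ (Fin 3),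
      IsPiecewiseIntegralCurve F' t η ∧ η 0 = x' ∧
      ∀ s ∈ Set.Icc 0 t,
        Real.sqrt ((η s 0 - x' 0) ^ 2 + (η s 1 - x' 1) ^ 2) < ε := by
  classical
  set θ := x' 2 with hθ
  set ω : ℝ := 4 / ε + 1 with hω
  have hω0 : 0 < ω := by positivity
  have hωε : 4 / ω < ε := by
    rw [div_lt_iff₀ hω0]
    have h4 : ε * ω = 4 + ε := by
      rw [hω, mul_add, mul_one, mul_div_assoc', mul_div_right_comm, div_self hε.ne', one_mul]
    rw [h4]; linarith
  set g : ℝ → (Fin 3 → ℝ) := fun s =>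
    ![x' 0 + (Real.sin (θ + ω * s) - Real.sin θ) / ω,
      x' 1 + (-Real.cos (θ + ω * s) + Real.cos θ) / ω,
      θ + ω * s] with hg
  set η : ℝ → EuclideanSpace ℝ (Fin 3) := fun s =>
    (EuclideanSpace.equiv (Fin 3) ℝ).symm (g s) with hη
  have hηs : ∀ s i, η s i = g s i := fun s i => rfl
  have hη0 : η 0 = x' := by
    ext i
    fin_cases i <;> simp [hηs, hg, hθ]
  have hlin : ∀ s : ℝ, HasDerivAt (fun r => θ + ω * r) ω s := by
    intro s
    simpa using ((hasDerivAt_id s).const_mul ω).const_add θ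
  have hderiv : ∀ s : ℝ,
      HasDerivAt η ((EuclideanSpace.equiv (Fin 3) ℝ).symm
        ![Real.cos (θ + ω * s), Real.sin (θ + ω * s), ω]) s := by
    intro s
    have h0 : HasDerivAt (fun r => x' 0 + (Real.sin (θ + ω * r) - Real.sin θ) / ω)
        (Real.cos (θ + ω * s)) s := by
      have := (((Real.hasDerivAt_sin (θ + ω * s)).comp s (hlin s)).sub_const
        (Real.sin θ)).div_const ω |>.const_add (x' 0)
      simpa [mul_div_assoc, mul_div_cancel_right₀ _ hω0.ne'] using this
    have h1 : HasDerivAt (fun r => x' 1 + (-Real.cos (θ + ω * r) + Real.cos θ) / ω)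
        (Real.sin (θ + ω * s)) s := by
      have := ((((Real.hasDerivAt_cos (θ + ω * s)).comp s (hlin s)).neg).add_const
        (Real.cos θ)).div_const ω |>.const_add (x' 1)
      simpa [mul_div_assoc, mul_div_cancel_right₀ _ hω0.ne'] using this
    have hpi : HasDerivAt g
        (![Real.cos (θ + ω * s), Real.sin (θ + ω * s), ω]) s := by
      rw [hasDerivAt_pi]
      intro i
      fin_cases i
      · simpa [hg] using h0
      · simpa [hg] using h1
      · simpa [hg] using hlin s
    exact ((EuclideanSpace.equiv (Fin 3) ℝ).symm.toContinuousLinearMap.hasFDerivAt).comp_hasDerivAt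
      s hpi
  have hcont : Continuous η := by
    refine ((EuclideanSpace.equiv (Fin 3) ℝ).symm.continuous).comp ?_
    apply continuous_pi
    intro i
    fin_cases i <;> simp [hg] <;> fun_prop
  refine ⟨η, ⟨hcont.continuousOn, ?_⟩, hη0, ?_⟩
  · rcases eq_or_lt_of_le ht with hte | hte
    · refine ⟨0, fun _ => 0, rfl, hte.symm ▸ rfl, ?_, fun i => i.elim0⟩
      intro i j hij
      omega
    · refine ⟨1, ![0, t], rfl, rfl, ?_, ?_⟩
      · refine Fin.strictMono_iff_lt_succ.mpr ?_
        intro i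
        fin_cases i
        simpa using hte
      · intro i
        refine ⟨fun x => X0 x + (ω - 1) • X1 x, ⟨ω - 1, rfl⟩, ?_⟩
        intro s _
        have hval : (fun x => X0 x + (ω - 1) • X1 x) (η s)
            = (EuclideanSpace.equiv (Fin 3) ℝ).symm
              ![Real.cos (θ + ω * s), Real.sin (θ + ω * s), ω] := by
          ext j
          have h2 : (η s) 2 = θ + ω * s := by simp [hηs, hg]
          fin_cases j <;>
            simp [X0, X1, h2, PiLp.add_apply, PiLp.smul_apply] <;> ring
        rw [hval]
        exact hderiv s
  · intro s _
    have hb0 : |η s 0 - x' 0| ≤ 2 / ω := by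
      have heq : η s 0 - x' 0 = (Real.sin (θ + ω * s) - Real.sin θ) / ω := by
        simp [hηs, hg]
      rw [heq, abs_div, abs_of_pos hω0]
      gcongr
      calc |Real.sin (θ + ω * s) - Real.sin θ|
          ≤ |Real.sin (θ + ω * s)| + |Real.sin θ| := abs_sub _ _
        _ ≤ 1 + 1 := add_le_add (Real.abs_sin_le_one _) (Real.abs_sin_le_one _)
        _ = 2 := by norm_num
    have hb1 : |η s 1 - x' 1| ≤ 2 / ω := by
      have heq : η s 1 - x' 1 = (-Real.cos (θ + ω * s) + Real.cos θ) / ω := by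
        simp [hηs, hg]
      rw [heq, abs_div, abs_of_pos hω0]
      gcongr
      calc |(-Real.cos (θ + ω * s) + Real.cos θ)|
          ≤ |(-Real.cos (θ + ω * s))| + |Real.cos θ| := abs_add_le _ _
        _ ≤ 1 + 1 := by
            rw [abs_neg]
            exact add_le_add (Real.abs_cos_le_one _) (Real.abs_cos_le_one _)
        _ = 2 := by norm_num
    have key : Real.sqrt ((η s 0 - x' 0) ^ 2 + (η s 1 - x' 1) ^ 2) ≤ 4 / ω := by
      have h1 : (η s 0 - x' 0) ^ 2 ≤ (2 / ω) ^ 2 := by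
        rw [← sq_abs]; exact pow_le_pow_left₀ (abs_nonneg _) hb0 2
      have h2 : (η s 1 - x' 1) ^ 2 ≤ (2 / ω) ^ 2 := by
        rw [← sq_abs]; exact pow_le_pow_left₀ (abs_nonneg _) hb1 2
      have hsum : (η s 0 - x' 0) ^ 2 + (η s 1 - x' 1) ^ 2 ≤ (4 / ω) ^ 2 := by
        have h8 : (2 / ω) ^ 2 + (2 / ω) ^ 2 ≤ (4 / ω) ^ 2 := by
          rw [div_pow, div_pow, ← add_div, div_le_div_iff₀ (by positivity) (by positivity)]
          nlinarith [sq_nonneg ω]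
        linarith
      calc Real.sqrt ((η s 0 - x' 0) ^ 2 + (η s 1 - x' 1) ^ 2)
          ≤ Real.sqrt ((4 / ω) ^ 2) := Real.sqrt_le_sqrt hsum
        _ = 4 / ω := Real.sqrt_sq (by positivity)
    exact key.trans_lt hωε
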